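/- arXiv:2602.04878 — 3 statements merged into one kernel-verified Lean document; each statement's English description precedes it below -/
import Mathlib

section
/- For real τ > 0 and positive integers k < L, the binomial tail Σ_{j=k+1}^{L} C(L,j) cosh(τ)^{L−j} sinh(τ)^j is bounded above by e^{τL} · (eLτ/k)^k, provided k > eLτ. -/
/-- `m^m ≤ e^m · m!` as reals, from the exponential series. -/
lemma pow_self_le_exp_mul_factorial (m : ℕ) :
    (m : ℝ) ^ m ≤ Real.exp 1 ^ m * (m.factorial : ℝ) := by
  have hfac : (0 : ℝ) < (m.factorial : ℝ) := by exact_mod_cast m.factorial_pos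
  have h1 : (m : ℝ) ^ m / (m.factorial : ℝ) ≤ Real.exp m := by
    calc (m : ℝ) ^ m / (m.factorial : ℝ)
        ≤ ∑ i ∈ Finset.range (m + 1), (m : ℝ) ^ i / (i.factorial : ℝ) := by
          refine Finset.single_le_sum (f := fun i => (m : ℝ) ^ i / (i.factorial : ℝ)) ?_ ?_
          · intro i _
            positivity
          · exact Finset.self_mem_range_succ m
      _ ≤ Real.exp m := Real.sum_le_exp_of_nonneg (by positivity) _
  have h2 : Real.exp (m : ℝ) = Real.exp 1 ^ m := by
    rw [← Real.exp_nat_mul]; norm_num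
  rw [div_le_iff₀ hfac] at h1
  rw [← h2]
  linarith [h1]

/-- Binomial tail bound: tail starting at `m` is at most `C(L,m) p^m`. -/
lemma tail_le_choose_mul_pow (L m : ℕ) (hm : 0 < m) (hmL : m ≤ L) (p : ℝ)
    (hp0 : 0 ≤ p) (hp1 : p ≤ 1) :
    ∑ j ∈ Finset.Icc m L, (L.choose j : ℝ) * (1 - p) ^ (L - j) * p ^ j ≤
      (L.choose m : ℝ) * p ^ m := by
  have hq0 : (0:ℝ) ≤ 1 - p := by linarith
  have step1 : ∑ j ∈ Finset.Icc m L, (L.choose j : ℝ) * (1 - p) ^ (L - j) * p ^ j ≤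
      ∑ j ∈ Finset.Icc m L, (L.choose m : ℝ) * p ^ m *
        (((L - m).choose (j - m) : ℝ) * p ^ (j - m) * (1 - p) ^ (L - j)) := by
    refine Finset.sum_le_sum ?_
    intro j hj
    rw [Finset.mem_Icc] at hj
    obtain ⟨hmj, hjL⟩ := hj
    have hchoose : (L.choose j : ℝ) ≤ (L.choose m : ℝ) * ((L - m).choose (j - m) : ℝ) := by
      have h := Nat.choose_mul (n := L) hmj
      have hpos : 1 ≤ j.choose m := Nat.one_le_iff_ne_zero.mpr
        (Nat.choose_pos hmj).ne'
      have : L.choose j ≤ L.choose m * (L - m).choose (j - m) := by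
        calc L.choose j ≤ L.choose j * j.choose m := Nat.le_mul_of_pos_right _ (Nat.choose_pos hmj)
          _ = L.choose m * (L - m).choose (j - m) := h
      exact_mod_cast this
    have hpj : p ^ j = p ^ m * p ^ (j - m) := by
      rw [← pow_add]
      congr 1
      omega
    calc (L.choose j : ℝ) * (1 - p) ^ (L - j) * p ^ j
        ≤ (L.choose m : ℝ) * ((L - m).choose (j - m) : ℝ) * (1 - p) ^ (L - j) * p ^ j := by
          apply mul_le_mul_of_nonneg_right _ (by positivity)
          exact mul_le_mul_of_nonneg_right hchoose (by positivity)
      _ = (L.choose m : ℝ) * p ^ m *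
            (((L - m).choose (j - m) : ℝ) * p ^ (j - m) * (1 - p) ^ (L - j)) := by
          rw [hpj]; ring
  have step2 : ∑ j ∈ Finset.Icc m L,
      (((L - m).choose (j - m) : ℝ) * p ^ (j - m) * (1 - p) ^ (L - j)) = 1 := by
    rw [← Finset.Ico_add_one_right_eq_Icc, Finset.sum_Ico_eq_sum_range]
    have hrange : m + 1 - m = 1 := by omega
    have hrange2 : L + 1 - m = (L - m) + 1 := by omega
    rw [hrange2]
    have : ∀ i ∈ Finset.range (L - m + 1),
        ((L - m).choose (m + i - m) : ℝ) * p ^ (m + i - m) * (1 - p) ^ (L - (m + i)) =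
        p ^ i * (1 - p) ^ (L - m - i) * ((L - m).choose i : ℝ) := by
      intro i hi
      have h1 : m + i - m = i := by omega
      have h2 : L - (m + i) = L - m - i := by omega
      rw [h1, h2]; ring
    rw [Finset.sum_congr rfl this, ← add_pow]
    simp
  calc ∑ j ∈ Finset.Icc m L, (L.choose j : ℝ) * (1 - p) ^ (L - j) * p ^ j
      ≤ ∑ j ∈ Finset.Icc m L, (L.choose m : ℝ) * p ^ m *
        (((L - m).choose (j - m) : ℝ) * p ^ (j - m) * (1 - p) ^ (L - j)) := step1
    _ = (L.choose m : ℝ) * p ^ m * ∑ j ∈ Finset.Icc m L,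
        (((L - m).choose (j - m) : ℝ) * p ^ (j - m) * (1 - p) ^ (L - j)) := by
        rw [Finset.mul_sum]
    _ = (L.choose m : ℝ) * p ^ m := by rw [step2, mul_one]

/-- For real `τ > 0` and positive integers `k < L`, the binomial tail
`Σ_{j=k+1}^{L} C(L,j) cosh(τ)^{L−j} sinh(τ)^j` is bounded above by
`e^{τL} · (eLτ/k)^k`, provided `k > eLτ`. -/
theorem binomial_tail_bound (τ : ℝ) (hτ : 0 < τ) (k L : ℕ) (hk : 0 < k) (hkL : k < L)
    (hke : Real.exp 1 * L * τ < k) :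
    ∑ j ∈ Finset.Icc (k + 1) L,
        (L.choose j : ℝ) * Real.cosh τ ^ (L - j) * Real.sinh τ ^ j ≤
      Real.exp (τ * L) * (Real.exp 1 * L * τ / k) ^ k := by
  have hexp : (0:ℝ) < Real.exp τ := Real.exp_pos τ
  set p : ℝ := Real.sinh τ / Real.exp τ with hp_def
  have hsinh : Real.sinh τ = Real.exp τ * p := by
    rw [hp_def, mul_div_assoc', mul_div_cancel_left₀ _ hexp.ne']
  have hcosh : Real.cosh τ = Real.exp τ * (1 - p) := by
    have h := Real.cosh_add_sinh τ
    rw [mul_sub, ← hsinh, mul_one]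
    linarith
  have hp0 : 0 < p := div_pos ((Real.sinh_pos_iff.mpr hτ)) hexp
  have hpτ : p ≤ τ := by
    have h1 : Real.sinh τ = (Real.exp τ - Real.exp (-τ)) / 2 := Real.sinh_eq τ
    have h2 : (-(2*τ)) + 1 ≤ Real.exp (-(2*τ)) := Real.add_one_le_exp _
    have h3 : Real.exp (-(2*τ)) = Real.exp (-τ) / Real.exp τ := by
      rw [← Real.exp_sub]; ring_nf
    have hp_eq : p = (1 - Real.exp (-(2*τ))) / 2 := by
      rw [hp_def, h1, h3]
      field_simp
    rw [hp_eq]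
    nlinarith [h2]
  have hp1 : p ≤ 1 := by
    have := Real.exp_pos (-(2*τ))
    have hp_eq : p = (1 - Real.exp (-(2*τ))) / 2 := by
      rw [hp_def, Real.sinh_eq, show Real.exp (-(2*τ)) = Real.exp (-τ) / Real.exp τ by
        rw [← Real.exp_sub]; ring_nf]
      field_simp
    rw [hp_eq]; linarith
  -- factor out exp(τL)
  have hL0 : (0:ℝ) < L := by exact_mod_cast hk.trans hkL
  have hfactor : ∀ j ∈ Finset.Icc (k+1) L,
      (L.choose j : ℝ) * Real.cosh τ ^ (L - j) * Real.sinh τ ^ j =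
      Real.exp (τ * L) * ((L.choose j : ℝ) * (1 - p) ^ (L - j) * p ^ j) := by
    intro j hj
    rw [Finset.mem_Icc] at hj
    have he : Real.exp τ ^ (L - j) * Real.exp τ ^ j = Real.exp (τ * L) := by
      rw [← pow_add, Nat.sub_add_cancel hj.2, ← Real.exp_nat_mul, mul_comm]
    rw [hcosh, hsinh, mul_pow, mul_pow, ← he]
    ring
  rw [Finset.sum_congr rfl hfactor, ← Finset.mul_sum]
  apply mul_le_mul_of_nonneg_left _ (Real.exp_pos _).le
  -- apply tail bound
  have htail := tail_le_choose_mul_pow L (k+1) (Nat.succ_pos k) hkL p hp0.le hp1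
  refine htail.trans ?_
  -- now bound C(L,k+1) p^{k+1} ≤ (eLτ/k)^k
  have hcb : (L.choose (k+1) : ℝ) ≤ (L:ℝ) ^ (k+1) / ((k+1).factorial : ℝ) :=
    Nat.choose_le_pow_div (k+1) L
  have hfacpos : (0:ℝ) < ((k+1).factorial : ℝ) := by exact_mod_cast (k+1).factorial_pos
  have hk1 : (0:ℝ) < (k:ℝ) + 1 := by positivity
  have hkpos : (0:ℝ) < (k:ℝ) := by exact_mod_cast hk
  have hmm := pow_self_le_exp_mul_factorial (k+1)
  have hr1 : Real.exp 1 * L * τ / ((k:ℝ)+1) < 1 := by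
    rw [div_lt_one hk1]
    push_cast at hke ⊢
    linarith
  have hr0 : 0 < Real.exp 1 * L * τ := by positivity
  calc (L.choose (k+1) : ℝ) * p ^ (k+1)
      ≤ ((L:ℝ) ^ (k+1) / ((k+1).factorial : ℝ)) * τ ^ (k+1) := by
        apply mul_le_mul hcb (pow_le_pow_left₀ hp0.le hpτ _) (by positivity) (by positivity)
    _ ≤ (Real.exp 1 * L * τ / ((k:ℝ)+1)) ^ (k+1) := by
        rw [div_pow, mul_pow, mul_pow, div_mul_eq_mul_div,
          div_le_div_iff₀ hfacpos (by positivity)]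
        push_cast at hmm
        have hLτ : (0:ℝ) ≤ (L:ℝ)^(k+1) * τ^(k+1) := by positivity
        calc (L:ℝ)^(k+1) * τ^(k+1) * ((k:ℝ)+1)^(k+1)
            = ((L:ℝ)^(k+1) * τ^(k+1)) * (((k:ℝ)+1)^(k+1)) := by ring
          _ ≤ ((L:ℝ)^(k+1) * τ^(k+1)) * (Real.exp 1 ^ (k+1) * ((k+1).factorial : ℝ)) :=
              mul_le_mul_of_nonneg_left hmm hLτ
          _ = Real.exp 1 ^ (k+1) * (L:ℝ)^(k+1) * τ^(k+1) * ((k+1).factorial : ℝ) := by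
              push_cast; ring
    _ ≤ (Real.exp 1 * L * τ / (k:ℝ)) ^ (k+1) := by
        apply pow_le_pow_left₀ (by positivity)
        apply div_le_div_of_nonneg_left hr0.le hkpos
        linarith
    _ ≤ (Real.exp 1 * L * τ / (k:ℝ)) ^ k := by
        apply pow_le_pow_of_le_one (by positivity) _ (by omega)
        rw [div_le_one hkpos]
        exact hke.le
end

section
/- For real τ > 0, integers 0 ≤ m ≤ L, and a real number q with 0 ≤ q ≤ 1, the double sum S = Σ_{r=m}^{L} C(L,r) τ^r Σ_{j=m}^{r} C(r,j) q^j satisfies S ≤ (1+τ)^L · (eLτq/m)^m whenever m > Lτq/(1+τ). -/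
open Finset

/-- For real `τ > 0`, integers `0 ≤ m ≤ L`, and real `q` with `0 ≤ q ≤ 1`, the double sum
`S = Σ_{r=m}^{L} C(L,r) τ^r Σ_{j=m}^{r} C(r,j) q^j` satisfies
`S ≤ (1+τ)^L · (eLτq/m)^m` whenever `m > Lτq/(1+τ)`. -/
theorem double_sum_backflow_bound (τ q : ℝ) (hτ : 0 < τ) (hq0 : 0 ≤ q) (hq1 : q ≤ 1)
    (m L : ℕ) (hmL : m ≤ L) (hm : (L : ℝ) * τ * q / (1 + τ) < m) :
    ∑ r ∈ Finset.Icc m L, (L.choose r : ℝ) * τ ^ r *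
        ∑ j ∈ Finset.Icc m r, (r.choose j : ℝ) * q ^ j ≤
      (1 + τ) ^ L * (Real.exp 1 * L * τ * q / m) ^ m := by
  have hτ1 : (0:ℝ) < 1 + τ := by linarith
  have hm0 : 0 < m := by
    rcases Nat.eq_zero_or_pos m with h | h
    · exfalso
      rw [h] at hm
      have h2 : (0:ℝ) ≤ (L:ℝ) * τ * q / (1 + τ) := by positivity
      simp at hm
      linarith
    · exact h
  have hmR : (0:ℝ) < m := by exact_mod_cast hm0
  have hL0 : 0 < L := lt_of_lt_of_le hm0 hmL
  have hLR : (0:ℝ) < L := by exact_mod_cast hL0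
  rcases eq_or_lt_of_le hq0 with hq | hq
  · -- q = 0 case
    subst hq
    have h1 : ∀ r : ℕ, ∑ j ∈ Finset.Icc m r, (r.choose j : ℝ) * (0:ℝ) ^ j = 0 := by
      intro r
      apply Finset.sum_eq_zero
      intro j hj
      have : m ≤ j := (Finset.mem_Icc.mp hj).1
      rw [zero_pow (by omega), mul_zero]
    simp only [h1, mul_zero, Finset.sum_const_zero, zero_div, zero_pow hm0.ne']
    positivity
  · -- 0 < q
    have ha : (0:ℝ) < τ * q := mul_pos hτ hq
    set t : ℝ := m * (1 + τ) / (L * (τ * q)) with ht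
    have hLa : (0:ℝ) < L * (τ * q) := by positivity
    have ht1 : 1 ≤ t := by
      rw [ht, le_div_iff₀ hLa]
      have h2 : (L:ℝ) * τ * q < m * (1 + τ) := (div_lt_iff₀ hτ1).mp hm
      nlinarith
    have ht0 : (0:ℝ) < t := lt_of_lt_of_le one_pos ht1
    have htm : (0:ℝ) < t ^ m := pow_pos ht0 m
    have htq0 : (0:ℝ) ≤ 1 + t * q := by positivity
    have binom : ∀ (x : ℝ) (n : ℕ), (1 + x) ^ n = ∑ j ∈ Finset.range (n+1), (n.choose j : ℝ) * x ^ j := by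
      intro x n
      rw [add_comm (1:ℝ) x, add_pow]
      exact Finset.sum_congr rfl fun j _ => by simp [mul_comm]
    -- inner sum bound
    have inner_bound : ∀ r : ℕ, ∑ j ∈ Finset.Icc m r, (r.choose j : ℝ) * q ^ j ≤
        (1 + t * q) ^ r / t ^ m := by
      intro r
      have step1 : ∑ j ∈ Finset.Icc m r, (r.choose j : ℝ) * q ^ j ≤
          (∑ j ∈ Finset.Icc m r, (r.choose j : ℝ) * (t * q) ^ j) / t ^ m := by
        rw [Finset.sum_div]
        apply Finset.sum_le_sum
        intro j hj
        obtain ⟨hj1, _⟩ := Finset.mem_Icc.mp hj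
        rw [le_div_iff₀ htm, mul_pow]
        have hpow : t ^ m ≤ t ^ j := pow_le_pow_right₀ ht1 hj1
        have hc : (0:ℝ) ≤ (r.choose j : ℝ) * q ^ j := by positivity
        nlinarith [mul_le_mul_of_nonneg_left hpow hc]
      have step2 : ∑ j ∈ Finset.Icc m r, (r.choose j : ℝ) * (t * q) ^ j ≤ (1 + t * q) ^ r := by
        rw [binom (t * q) r]
        apply Finset.sum_le_sum_of_subset_of_nonneg
        · intro j hj
          simp only [Finset.mem_Icc, Finset.mem_range] at *
          omega
        · intro j _ _
          positivity
      exact step1.trans ((div_le_div_iff_of_pos_right htm).mpr step2)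
    -- key algebraic identity
    have hkey : 1 + τ * (1 + t * q) = (1 + τ) * (1 + (m:ℝ) / L) := by
      have h2 : τ * (t * q) = m * (1 + τ) / L := by
        rw [ht]
        field_simp
      rw [mul_add, mul_one, ← add_assoc, h2]
      field_simp
    -- exponential bound
    have hexpm : (1 + (m:ℝ) / L) ^ L ≤ Real.exp 1 ^ m := by
      have h1 : 1 + (m:ℝ) / L ≤ Real.exp ((m:ℝ) / L) := by
        have := Real.add_one_le_exp ((m:ℝ) / L)
        linarith
      calc (1 + (m:ℝ) / L) ^ L ≤ Real.exp ((m:ℝ) / L) ^ L :=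
            pow_le_pow_left₀ (by positivity) h1 L
        _ = Real.exp ((m:ℝ) / L * L) := by rw [← Real.exp_nat_mul]; ring_nf
        _ = Real.exp m := by rw [div_mul_cancel₀ _ hLR.ne']
        _ = Real.exp 1 ^ m := by rw [← Real.exp_nat_mul, mul_one]
    -- bound on 1/t^m
    have htinv : 1 / t ^ m ≤ ((L:ℝ) * τ * q / m) ^ m := by
      have heq : 1 / t ^ m = ((L:ℝ) * (τ * q) / (m * (1 + τ))) ^ m := by
        rw [ht, one_div, ← inv_pow, inv_div]
      rw [heq]
      apply pow_le_pow_left₀ (by positivity)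
      calc (L:ℝ) * (τ * q) / (m * (1 + τ)) ≤ (L:ℝ) * (τ * q) / m := by
            apply div_le_div_of_nonneg_left (by positivity) hmR
            nlinarith
        _ = (L:ℝ) * τ * q / m := by ring
    -- main chain
    calc ∑ r ∈ Finset.Icc m L, (L.choose r : ℝ) * τ ^ r *
          ∑ j ∈ Finset.Icc m r, (r.choose j : ℝ) * q ^ j
        ≤ ∑ r ∈ Finset.Icc m L, (L.choose r : ℝ) * τ ^ r * ((1 + t * q) ^ r / t ^ m) := by
          apply Finset.sum_le_sum
          intro r _
          exact mul_le_mul_of_nonneg_left (inner_bound r) (by positivity)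
      _ = (∑ r ∈ Finset.Icc m L, (L.choose r : ℝ) * (τ * (1 + t * q)) ^ r) / t ^ m := by
          rw [Finset.sum_div]
          apply Finset.sum_congr rfl
          intro r _
          rw [mul_pow]
          ring
      _ ≤ (∑ r ∈ Finset.range (L+1), (L.choose r : ℝ) * (τ * (1 + t * q)) ^ r) / t ^ m := by
          apply (div_le_div_iff_of_pos_right htm).mpr
          apply Finset.sum_le_sum_of_subset_of_nonneg
          · intro r hr
            simp only [Finset.mem_Icc, Finset.mem_range] at *
            omega
          · intro r _ _
            positivity
      _ = (1 + τ * (1 + t * q)) ^ L / t ^ m := by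
          rw [binom (τ * (1 + t * q)) L]
      _ = (1 + τ) ^ L * ((1 + (m:ℝ) / L) ^ L * (1 / t ^ m)) := by
          rw [hkey, mul_pow]
          ring
      _ ≤ (1 + τ) ^ L * (Real.exp 1 ^ m * ((L:ℝ) * τ * q / m) ^ m) := by
          apply mul_le_mul_of_nonneg_left _ (by positivity)
          apply mul_le_mul hexpm htinv (by positivity) (by positivity)
      _ = (1 + τ) ^ L * (Real.exp 1 * L * τ * q / m) ^ m := by
          rw [← mul_pow]
          congr 2
          ring
end

section
/- Consider a Pauli string Q of weight w on a 1D chain of n qubits with M nearest-neighbor edges (M = n−1 open or M = n periodic). Sample an edge uniformly and a two-qubit Pauli (from 9 options) uniformly on that edge. Then the joint probability of weight-decay and commutation is at most (w−1)/(9M), the probability of anticommutation is at most 4w/(3M), and hence the conditional backflow probability Pr(Decay | Commute) ≤ (w−1)/(9M − 12w), assuming 9M > 12w. -/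
/-! Backflow bound for nearest-neighbor two-qubit Pauli gates on a 1D chain of `n`
qubits with `M` nearest-neighbor edges (`M = n−1` for an open chain, `M = n` for a
periodic one).  An edge is sampled uniformly from the `M` edges, and a non-identity
two-qubit Pauli is sampled uniformly from the `9` options on that edge. -/

/-- Encoding of a non-identity single-qubit Pauli into `Fin 4` (`0` codes identity). -/
def pcodeNN : Fin 3 → Fin 4 := Fin.succ

/-- Weight of a Pauli string `Q : Fin n → Fin 4`. -/
def pweightNN {n : ℕ} (Q : Fin n → Fin 4) : ℕ :=
  (Finset.univ.filter fun i => Q i ≠ 0).card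

/-- Number of gate sites where the gate Pauli and `Q` anticommute site-wise. -/
def anticountNN {n M : ℕ} (edges : Fin M → Fin n × Fin n) (Q : Fin n → Fin 4)
    (ω : Fin M × (Fin 3 × Fin 3)) : ℕ :=
  (if Q (edges ω.1).1 ≠ 0 ∧ Q (edges ω.1).1 ≠ pcodeNN ω.2.1 then 1 else 0) +
  (if Q (edges ω.1).2 ≠ 0 ∧ Q (edges ω.1).2 ≠ pcodeNN ω.2.2 then 1 else 0)

/-- The gate commutes with `Q`. -/
def CommutesNN {n M : ℕ} (edges : Fin M → Fin n × Fin n) (Q : Fin n → Fin 4)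
    (ω : Fin M × (Fin 3 × Fin 3)) : Prop :=
  Even (anticountNN edges Q ω)

/-- The gate reduces the weight of `Q` by two (it matches `Q` on both edge sites). -/
def DecaysNN {n M : ℕ} (edges : Fin M → Fin n × Fin n) (Q : Fin n → Fin 4)
    (ω : Fin M × (Fin 3 × Fin 3)) : Prop :=
  pcodeNN ω.2.1 = Q (edges ω.1).1 ∧ pcodeNN ω.2.2 = Q (edges ω.1).2

/-- Uniform probability of an event over the `9·M` outcomes. -/
noncomputable def unifPrNN (n M : ℕ) (Ev : Fin M × (Fin 3 × Fin 3) → Prop) : ℝ :=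
  (Nat.card {ω : Fin M × (Fin 3 × Fin 3) // Ev ω} : ℝ) / (9 * M)

lemma decDC : ∀ v1 v2 : Fin 4,
    (Finset.univ.filter fun p : Fin 3 × Fin 3 =>
      (pcodeNN p.1 = v1 ∧ pcodeNN p.2 = v2) ∧
        Even ((if v1 ≠ 0 ∧ v1 ≠ pcodeNN p.1 then 1 else 0) +
              (if v2 ≠ 0 ∧ v2 ≠ pcodeNN p.2 then 1 else 0))).card
      ≤ if v1 ≠ 0 ∧ v2 ≠ 0 then 1 else 0 := by decide

lemma decNC : ∀ v1 v2 : Fin 4,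
    (Finset.univ.filter fun p : Fin 3 × Fin 3 =>
      ¬ Even ((if v1 ≠ 0 ∧ v1 ≠ pcodeNN p.1 then 1 else 0) +
              (if v2 ≠ 0 ∧ v2 ≠ pcodeNN p.2 then 1 else 0))).card
      ≤ 6 * ((if v1 ≠ 0 then 1 else 0) + (if v2 ≠ 0 then 1 else 0)) := by decide

lemma cardFilterCongr {α} [Fintype α] {p q : α → Prop} [DecidablePred p] [DecidablePred q]
    (h : ∀ a, p a ↔ q a) :
    (Finset.univ.filter p).card = (Finset.univ.filter q).card := by
  simp only [Finset.card_filter]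
  exact Finset.sum_congr rfl fun a _ => if_congr (h a) rfl rfl

lemma prodCard {M : ℕ} (P : Fin M × (Fin 3 × Fin 3) → Prop) [DecidablePred P] :
    (Finset.univ.filter P).card
      = ∑ m : Fin M, (Finset.univ.filter fun p : Fin 3 × Fin 3 => P (m, p)).card := by
  rw [Finset.card_filter, Fintype.sum_prod_type]
  exact Finset.sum_congr rfl fun m _ => (Finset.card_filter _ _).symm

lemma natCardEq {α} [Fintype α] (P : α → Prop) [DecidablePred P] :
    Nat.card {x // P x} = (Finset.univ.filter P).card := by
  rw [Nat.card_eq_fintype_card, Fintype.card_subtype]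

/-- Backflow bound for nearest-neighbor gates: for a Pauli string of weight `w ≥ 1` on a
chain of `n` qubits with `M` edges (`M = n−1` open or `M = n` periodic),
`Pr(Decay ∩ Commute) ≤ (w−1)/(9M)`, `Pr(Anticommute) ≤ 4w/(3M)`, and hence
`Pr(Decay | Commute) ≤ (w−1)/(9M − 12w)` whenever `9M > 12w`. -/
theorem backflow_nearest_neighbor (n M : ℕ) (hn : 2 < n)
    (hM : M = n - 1 ∨ M = n)
    (edges : Fin M → Fin n × Fin n)
    (hadj : ∀ m, ((edges m).2 : ℕ) = (((edges m).1 : ℕ) + 1) % n)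
    (hinj : Function.Injective edges)
    (Q : Fin n → Fin 4) (w : ℕ) (hw : pweightNN Q = w) (hw1 : 1 ≤ w)
    (hden : 12 * (w : ℝ) < 9 * M) :
    unifPrNN n M (fun ω => DecaysNN edges Q ω ∧ CommutesNN edges Q ω) ≤
        ((w : ℝ) - 1) / (9 * M) ∧
      unifPrNN n M (fun ω => ¬ CommutesNN edges Q ω) ≤ 4 * w / (3 * M) ∧
      unifPrNN n M (fun ω => DecaysNN edges Q ω ∧ CommutesNN edges Q ω) /
          unifPrNN n M (CommutesNN edges Q) ≤
        ((w : ℝ) - 1) / (9 * M - 12 * w) := by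
  classical
  have hn0 : 0 < n := by omega
  have hden' : 12 * w < 9 * M := by exact_mod_cast hden
  have hMn : M ≤ n := by omega
  have hM0 : 0 < M := by omega
  have hwn : w < n := by omega
  -- the successor map on the chain
  set nxt : Fin n → Fin n := fun i => ⟨(i.val + 1) % n, Nat.mod_lt _ hn0⟩ with hnxt
  have hadj' : ∀ m, (edges m).2 = nxt (edges m).1 := fun m => Fin.ext (hadj m)
  have nxt_inj : Function.Injective nxt := by
    intro a b h
    have ha := a.isLt; have hb := b.isLt
    have h' : (a.val + 1) % n = (b.val + 1) % n := congrArg Fin.val h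
    apply Fin.ext
    rcases eq_or_ne (a.val + 1) n with h1 | h1 <;> rcases eq_or_ne (b.val + 1) n with h2 | h2
    · omega
    · rw [h1, Nat.mod_self, Nat.mod_eq_of_lt (by omega)] at h'; omega
    · rw [h2, Nat.mod_self, Nat.mod_eq_of_lt (by omega)] at h'; omega
    · rw [Nat.mod_eq_of_lt (by omega), Nat.mod_eq_of_lt (by omega)] at h'; omega
  have hinj1 : Function.Injective fun m => (edges m).1 := by
    intro a b h
    have h1 : (edges a).1 = (edges b).1 := h
    apply hinj
    have h2 : (edges a).2 = (edges b).2 := by rw [hadj' a, hadj' b, h1]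
    exact Prod.ext h1 h2
  have hinj2 : Function.Injective fun m => (edges m).2 := by
    intro a b h
    have h' : (edges a).2 = (edges b).2 := h
    rw [hadj' a, hadj' b] at h'
    exact hinj1 (nxt_inj h')
  -- support
  set S : Finset (Fin n) := Finset.univ.filter (fun i => Q i ≠ 0) with hSdef
  have hScard : S.card = w := hw
  -- there exists a boundary site: in the support, with successor outside
  obtain ⟨s, hs, hs2⟩ : ∃ s, Q s ≠ 0 ∧ Q (nxt s) = 0 := by
    by_contra hcon
    push_neg at hcon
    obtain ⟨i, hi⟩ : ∃ i, Q i ≠ 0 := by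
      have : S.Nonempty := Finset.card_pos.mp (by omega)
      obtain ⟨i, hiS⟩ := this
      exact ⟨i, (Finset.mem_filter.mp hiS).2⟩
    have key : ∀ k, Q ⟨(i.val + k) % n, Nat.mod_lt _ hn0⟩ ≠ 0 := by
      intro k
      induction k with
      | zero => simpa [Nat.mod_eq_of_lt i.isLt] using hi
      | succ k ih =>
        have := hcon _ ih
        have he : nxt ⟨(i.val + k) % n, Nat.mod_lt _ hn0⟩
            = ⟨(i.val + (k + 1)) % n, Nat.mod_lt _ hn0⟩ := by
          apply Fin.ext
          show ((i.val + k) % n + 1) % n = (i.val + (k + 1)) % n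
          rw [Nat.mod_add_mod]
          ring_nf
        rwa [he] at this
    -- Q is nowhere zero, so w = n, contradiction
    have hall : ∀ t : Fin n, Q t ≠ 0 := by
      intro t
      have hi' := i.isLt
      have h1 : (⟨(i.val + (n + t.val - i.val)) % n, Nat.mod_lt _ hn0⟩ : Fin n) = t := by
        apply Fin.ext
        show (i.val + (n + t.val - i.val)) % n = t.val
        have hx : i.val + (n + t.val - i.val) = n + t.val := by omega
        rw [hx, Nat.add_mod_left, Nat.mod_eq_of_lt t.isLt]
      have := key (n + t.val - i.val)
      rwa [h1] at this
    have : S = Finset.univ := Finset.eq_univ_iff_forall.mpr fun t =>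
      Finset.mem_filter.mpr ⟨Finset.mem_univ t, hall t⟩
    rw [this, Finset.card_univ, Fintype.card_fin] at hScard
    omega
  have hsS : s ∈ S := Finset.mem_filter.mpr ⟨Finset.mem_univ s, hs⟩
  -- edge counts
  have hE1 : (Finset.univ.filter fun m : Fin M => Q (edges m).1 ≠ 0).card ≤ w := by
    rw [← hScard]
    apply Finset.card_le_card_of_injOn (fun m => (edges m).1)
    · intro m hm
      exact Finset.mem_filter.mpr ⟨Finset.mem_univ _, (Finset.mem_filter.mp hm).2⟩
    · exact hinj1.injOn
  have hE2 : (Finset.univ.filter fun m : Fin M => Q (edges m).2 ≠ 0).card ≤ w := by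
    rw [← hScard]
    apply Finset.card_le_card_of_injOn (fun m => (edges m).2)
    · intro m hm
      exact Finset.mem_filter.mpr ⟨Finset.mem_univ _, (Finset.mem_filter.mp hm).2⟩
    · exact hinj2.injOn
  have hB : (Finset.univ.filter fun m : Fin M =>
      Q (edges m).1 ≠ 0 ∧ Q (edges m).2 ≠ 0).card ≤ w - 1 := by
    have : w - 1 = (S.erase s).card := by
      rw [Finset.card_erase_of_mem hsS, hScard]
    rw [this]
    apply Finset.card_le_card_of_injOn (fun m => (edges m).1)
    · intro m hm
      obtain ⟨-, h1, h2⟩ := Finset.mem_filter.mp hm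
      refine Finset.mem_erase.mpr ⟨?_, Finset.mem_filter.mpr ⟨Finset.mem_univ _, h1⟩⟩
      intro he
      rw [hadj' m, show (edges m).1 = s from he] at h2
      exact h2 hs2
    · exact hinj1.injOn
  -- the three raw counts
  set DC : Fin M × (Fin 3 × Fin 3) → Prop :=
    fun ω => DecaysNN edges Q ω ∧ CommutesNN edges Q ω with hDCdef
  have cardDC : (Finset.univ.filter DC).card ≤ w - 1 := by
    rw [prodCard]
    calc ∑ m : Fin M, (Finset.univ.filter fun p : Fin 3 × Fin 3 => DC (m, p)).card
        ≤ ∑ m : Fin M, (if Q (edges m).1 ≠ 0 ∧ Q (edges m).2 ≠ 0 then 1 else 0) := by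
          apply Finset.sum_le_sum
          intro m _
          calc (Finset.univ.filter fun p : Fin 3 × Fin 3 => DC (m, p)).card
              = (Finset.univ.filter fun p : Fin 3 × Fin 3 =>
                  (pcodeNN p.1 = Q (edges m).1 ∧ pcodeNN p.2 = Q (edges m).2) ∧
                    Even ((if Q (edges m).1 ≠ 0 ∧ Q (edges m).1 ≠ pcodeNN p.1 then 1 else 0) +
                          (if Q (edges m).2 ≠ 0 ∧ Q (edges m).2 ≠ pcodeNN p.2 then 1 else 0))).card :=
                cardFilterCongr fun p => Iff.rfl
            _ ≤ _ := decDC _ _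
      _ = (Finset.univ.filter fun m : Fin M =>
            Q (edges m).1 ≠ 0 ∧ Q (edges m).2 ≠ 0).card := (Finset.card_filter _ _).symm
      _ ≤ w - 1 := hB
  have cardNC : (Finset.univ.filter fun ω => ¬ CommutesNN edges Q ω).card ≤ 12 * w := by
    rw [prodCard]
    calc ∑ m : Fin M, (Finset.univ.filter fun p : Fin 3 × Fin 3 =>
            ¬ CommutesNN edges Q (m, p)).card
        ≤ ∑ m : Fin M, 6 * ((if Q (edges m).1 ≠ 0 then 1 else 0) +
            (if Q (edges m).2 ≠ 0 then 1 else 0)) := by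
          apply Finset.sum_le_sum
          intro m _
          calc (Finset.univ.filter fun p : Fin 3 × Fin 3 => ¬ CommutesNN edges Q (m, p)).card
              = (Finset.univ.filter fun p : Fin 3 × Fin 3 =>
                  ¬ Even ((if Q (edges m).1 ≠ 0 ∧ Q (edges m).1 ≠ pcodeNN p.1 then 1 else 0) +
                          (if Q (edges m).2 ≠ 0 ∧ Q (edges m).2 ≠ pcodeNN p.2 then 1 else 0))).card :=
                cardFilterCongr fun p => Iff.rfl
            _ ≤ _ := decNC _ _
      _ = 6 * ((Finset.univ.filter fun m : Fin M => Q (edges m).1 ≠ 0).card +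
               (Finset.univ.filter fun m : Fin M => Q (edges m).2 ≠ 0).card) := by
          rw [Finset.card_filter, Finset.card_filter, ← Finset.sum_add_distrib,
            ← Finset.mul_sum]
      _ ≤ 12 * w := by omega
  have cardTotal : (Finset.univ.filter (CommutesNN edges Q)).card +
      (Finset.univ.filter fun ω => ¬ CommutesNN edges Q ω).card = 9 * M := by
    rw [Finset.card_filter_add_card_filter_not]
    simp [Finset.card_univ, mul_comm]
  have cardC : 9 * M - 12 * w ≤ (Finset.univ.filter (CommutesNN edges Q)).card := by omega
  -- move to the reals
  have h9M : (0:ℝ) < 9 * M := by positivity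
  have hprDC : unifPrNN n M DC = ((Finset.univ.filter DC).card : ℝ) / (9 * M) := by
    rw [unifPrNN, natCardEq]
  have hprNC : unifPrNN n M (fun ω => ¬ CommutesNN edges Q ω)
      = (((Finset.univ.filter fun ω => ¬ CommutesNN edges Q ω).card : ℝ)) / (9 * M) := by
    rw [unifPrNN, natCardEq]
  have hprC : unifPrNN n M (CommutesNN edges Q)
      = (((Finset.univ.filter (CommutesNN edges Q)).card : ℝ)) / (9 * M) := by
    rw [unifPrNN, natCardEq]
  have hDCle : ((Finset.univ.filter DC).card : ℝ) ≤ (w : ℝ) - 1 := by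
    have := cardDC
    have : ((Finset.univ.filter DC).card : ℝ) ≤ ((w - 1 : ℕ) : ℝ) := by exact_mod_cast this
    rwa [Nat.cast_sub hw1, Nat.cast_one] at this
  have hNCle : ((Finset.univ.filter fun ω => ¬ CommutesNN edges Q ω).card : ℝ) ≤ 12 * w := by
    exact_mod_cast cardNC
  have hCge : 9 * (M:ℝ) - 12 * w ≤ ((Finset.univ.filter (CommutesNN edges Q)).card : ℝ) := by
    have h12 : 12 * w ≤ 9 * M := by omega
    have : ((9 * M - 12 * w : ℕ) : ℝ) ≤ ((Finset.univ.filter (CommutesNN edges Q)).card : ℝ) := by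
      exact_mod_cast cardC
    push_cast [Nat.cast_sub h12] at this
    linarith
  have hw1R : (1:ℝ) ≤ (w:ℝ) := by exact_mod_cast hw1
  refine ⟨?_, ?_, ?_⟩
  · rw [hprDC]
    gcongr
  · rw [hprNC, div_le_div_iff₀ h9M (by positivity : (0:ℝ) < 3 * M)]
    nlinarith [hNCle, h9M]
  · rw [hprDC, hprC]
    have hb : (0:ℝ) < ((Finset.univ.filter (CommutesNN edges Q)).card : ℝ) := by linarith
    have heq : ((Finset.univ.filter DC).card : ℝ) / (9 * M) /
        (((Finset.univ.filter (CommutesNN edges Q)).card : ℝ) / (9 * M))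
        = ((Finset.univ.filter DC).card : ℝ) /
          ((Finset.univ.filter (CommutesNN edges Q)).card : ℝ) := by
      rw [div_div_div_cancel_right₀]
      exact ne_of_gt h9M
    rw [heq]
    exact div_le_div₀ (by linarith) hDCle (by linarith) hCge
end
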